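/- Let (γ, ℓ, ℓ⁽²⁾, Y) be coordinate hypersurface data on U with inverse blocks (P, n, n⁽²⁾) and derived fields Γ̄^c_{ab}, K_{ab}, φ_a, Ψ^b_a. Then the following equations hold on U: ∇̄_aP^{bc} + n^bΨ^c_a + n^cΨ^b_a = 0; ∇̄_an^b + φ_a n^b − P^{bc}K_{ac} + n⁽²⁾Ψ^b_a = 0; −½∂_a n⁽²⁾ − n⁽²⁾φ_a + K_{ab}n^b = 0. -/

import Mathlib

open scoped BigOperators

noncomputable section

namespace HypData

variable {m : ℕ}

/-- Scalar field on ℝ^m. -/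
abbrev Sc (m : ℕ) := (Fin m → ℝ) → ℝ
/-- One-index field. -/
abbrev Vec (m : ℕ) := (Fin m → ℝ) → Fin m → ℝ
/-- Two-index field. -/
abbrev Ten (m : ℕ) := (Fin m → ℝ) → Fin m → Fin m → ℝ
/-- Connection coefficients `Γ x c a b = Γ^c_{ab}` (first index upper). -/
abbrev Conn (m : ℕ) := (Fin m → ℝ) → Fin m → Fin m → Fin m → ℝ
/-- Three-index field. -/
abbrev Ten3 (m : ℕ) := (Fin m → ℝ) → Fin m → Fin m → Fin m → ℝ

/-- Partial derivative of `f` in the `a`-th coordinate direction at `x`. -/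
def pd (a : Fin m) (f : Sc m) (x : Fin m → ℝ) : ℝ :=
  fderiv ℝ f x (Pi.single a 1)

/-- Kronecker delta. -/
def kd (a b : Fin m) : ℝ := if a = b then 1 else 0

/-- Equations (EqP1)-(EqP4): `[[P,n],[nᵀ,n2]]` consists of the inverse blocks of
the block matrix `[[γ,ℓ],[ℓᵀ,ℓ2]]`. -/
def InvBlocks (γ : Fin m → Fin m → ℝ) (ℓ : Fin m → ℝ) (ℓ2 : ℝ)
    (P : Fin m → Fin m → ℝ) (n : Fin m → ℝ) (n2 : ℝ) : Prop :=
  (∀ a b, (∑ c, P a c * γ c b) + n a * ℓ b = kd a b) ∧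
  (∀ a, (∑ b, P a b * ℓ b) + ℓ2 * n a = 0) ∧
  ((∑ a, n a * ℓ a) + n2 * ℓ2 = 1) ∧
  (∀ a, (∑ b, γ a b * n b) + n2 * ℓ a = 0)

/-- ∇_a ω_b. -/
def covD1 (Γ : Conn m) (ω : Vec m) (x : Fin m → ℝ) (a b : Fin m) : ℝ :=
  pd a (fun y => ω y b) x - ∑ d, Γ x d a b * ω x d

/-- ∇_a X^b. -/
def covD1U (Γ : Conn m) (X : Vec m) (x : Fin m → ℝ) (a b : Fin m) : ℝ :=
  pd a (fun y => X y b) x + ∑ d, Γ x b a d * X x d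

/-- ∇_a T_{bc}. -/
def covD2 (Γ : Conn m) (T : Ten m) (x : Fin m → ℝ) (a b c : Fin m) : ℝ :=
  pd a (fun y => T y b c) x - (∑ d, Γ x d a b * T x d c) - (∑ d, Γ x d a c * T x b d)

/-- ∇_a T^{bc}. -/
def covD2U (Γ : Conn m) (T : Ten m) (x : Fin m → ℝ) (a b c : Fin m) : ℝ :=
  pd a (fun y => T y b c) x + (∑ d, Γ x b a d * T x d c) + (∑ d, Γ x c a d * T x b d)

/-- ∇_a S^b_c (first index of `S` upper, second lower). -/
def covD11 (Γ : Conn m) (S : Ten m) (x : Fin m → ℝ) (a b c : Fin m) : ℝ :=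
  pd a (fun y => S y b c) x + (∑ d, Γ x b a d * S x d c) - (∑ d, Γ x d a c * S x b d)

/-- ∇_a Q^{bcd}. -/
def covD3U (Γ : Conn m) (Q : Ten3 m) (x : Fin m → ℝ) (a b c d : Fin m) : ℝ :=
  pd a (fun y => Q y b c d) x + (∑ f, Γ x b a f * Q x f c d)
    + (∑ f, Γ x c a f * Q x b f d) + (∑ f, Γ x d a f * Q x b c f)

/-- Curvature `R^a_{bcd} = ∂_cΓ^a_{db} − ∂_dΓ^a_{cb} + Γ^a_{cf}Γ^f_{db} − Γ^a_{df}Γ^f_{cb}`. -/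
def curv (Γ : Conn m) (x : Fin m → ℝ) (a b c d : Fin m) : ℝ :=
  pd c (fun y => Γ y a d b) x - pd d (fun y => Γ y a c b) x
    + (∑ f, Γ x a c f * Γ x f d b) - (∑ f, Γ x a d f * Γ x f c b)

/-- `F_{ab} = ½(∂_aℓ_b − ∂_bℓ_a)`. -/
def Ff (ℓ : Vec m) (x : Fin m → ℝ) (a b : Fin m) : ℝ :=
  (pd a (fun y => ℓ y b) x - pd b (fun y => ℓ y a) x) / 2

/-- `U_{ab} = ½(n^c∂_cγ_{ab} + γ_{cb}∂_an^c + γ_{ac}∂_bn^c + ℓ_a∂_bn⁽²⁾ + ℓ_b∂_an⁽²⁾)`. -/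
def Uf (γ : Ten m) (ℓ : Vec m) (n : Vec m) (n2 : Sc m)
    (x : Fin m → ℝ) (a b : Fin m) : ℝ :=
  ((∑ c, (n x c * pd c (fun y => γ y a b) x + γ x c b * pd a (fun y => n y c) x
      + γ x a c * pd b (fun y => n y c) x))
    + ℓ x a * pd b n2 x + ℓ x b * pd a n2 x) / 2

/-- Metric hypersurface connection `Γ̊^c_{ab}`. -/
def Gam0 (γ : Ten m) (ℓ : Vec m) (P : Ten m) (n : Vec m)
    (x : Fin m → ℝ) (c a b : Fin m) : ℝ :=
  (∑ d, P x c d * (pd a (fun y => γ y b d) x + pd b (fun y => γ y a d) x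
      - pd d (fun y => γ y a b) x)) / 2
  + n x c * (pd a (fun y => ℓ y b) x + pd b (fun y => ℓ y a) x) / 2

/-- The connection `Γ̄^c_{ab} = Γ̊^c_{ab} − n^c Y_{ab}`. -/
def GamB (γ : Ten m) (ℓ : Vec m) (P : Ten m) (n : Vec m) (Y : Ten m)
    (x : Fin m → ℝ) (c a b : Fin m) : ℝ :=
  Gam0 γ ℓ P n x c a b - n x c * Y x a b

/-- `K_{ab} = n⁽²⁾Y_{ab} + U_{ab}`. -/
def Kf (γ : Ten m) (ℓ : Vec m) (n : Vec m) (n2 : Sc m) (Y : Ten m)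
    (x : Fin m → ℝ) (a b : Fin m) : ℝ :=
  n2 x * Y x a b + Uf γ ℓ n n2 x a b

/-- `φ_a = ½n⁽²⁾∂_aℓ⁽²⁾ + n^b(Y_{ab} + F_{ab})`. -/
def phif (ℓ : Vec m) (ℓ2 : Sc m) (n : Vec m) (n2 : Sc m) (Y : Ten m)
    (x : Fin m → ℝ) (a : Fin m) : ℝ :=
  n2 x * pd a ℓ2 x / 2 + ∑ b, n x b * (Y x a b + Ff ℓ x a b)

/-- `Ψ^b_a = P^{bc}(Y_{ac} + F_{ac}) + ½n^b∂_aℓ⁽²⁾`. -/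
def Psif (ℓ : Vec m) (ℓ2 : Sc m) (P : Ten m) (n : Vec m) (Y : Ten m)
    (x : Fin m → ℝ) (b a : Fin m) : ℝ :=
  (∑ c, P x b c * (Y x a c + Ff ℓ x a c)) + n x b * pd a ℓ2 x / 2

/-- Smoothness of a scalar field on `U`. -/
def SmSc (U : Set (Fin m → ℝ)) (f : Sc m) : Prop := ContDiffOn ℝ (⊤ : ℕ∞) f U
/-- Smoothness of a one-index field on `U`. -/
def SmVec (U : Set (Fin m → ℝ)) (f : Vec m) : Prop :=
  ∀ a, ContDiffOn ℝ (⊤ : ℕ∞) (fun x => f x a) U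
/-- Smoothness of a two-index field on `U`. -/
def SmTen (U : Set (Fin m → ℝ)) (f : Ten m) : Prop :=
  ∀ a b, ContDiffOn ℝ (⊤ : ℕ∞) (fun x => f x a b) U

/-- Smooth coordinate hypersurface metric data on `U`. -/
def MetricData (U : Set (Fin m → ℝ)) (γ : Ten m) (ℓ : Vec m) (ℓ2 : Sc m)
    (P : Ten m) (n : Vec m) (n2 : Sc m) : Prop :=
  SmTen U γ ∧ SmVec U ℓ ∧ SmSc U ℓ2 ∧ SmTen U P ∧ SmVec U n ∧ SmSc U n2 ∧
  (∀ x ∈ U, ∀ a b, γ x a b = γ x b a) ∧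
  (∀ x ∈ U, ∀ a b, P x a b = P x b a) ∧
  (∀ x ∈ U, InvBlocks (γ x) (ℓ x) (ℓ2 x) (P x) (n x) (n2 x))

/-- Gauge-transformed `ℓ`. -/
def gaugeL (γ : Ten m) (ℓ : Vec m) (u : Sc m) (V : Vec m) : Vec m :=
  fun x a => u x * (ℓ x a + ∑ b, V x b * γ x a b)

/-- Gauge-transformed `ℓ⁽²⁾`. -/
def gaugeL2 (γ : Ten m) (ℓ : Vec m) (ℓ2 : Sc m) (u : Sc m) (V : Vec m) : Sc m :=
  fun x => u x ^ 2 * (ℓ2 x + 2 * (∑ a, V x a * ℓ x a) + ∑ a, ∑ b, V x a * V x b * γ x a b)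

/-- Gauge-transformed `Y`. -/
def gaugeY (γ : Ten m) (ℓ : Vec m) (Y : Ten m) (u : Sc m) (V : Vec m) : Ten m :=
  fun x a b => u x * Y x a b + (ℓ x a * pd b u x + ℓ x b * pd a u x) / 2
    + ((u x * ∑ c, V x c * pd c (fun y => γ y a b) x)
      + (∑ c, γ x c b * pd a (fun y => u y * V y c) x)
      + (∑ c, γ x a c * pd b (fun y => u y * V y c) x)) / 2

/-- Gauge-transformed `P`. -/
def gaugeP (P : Ten m) (n : Vec m) (n2 : Sc m) (V : Vec m) : Ten m :=
  fun x a b => P x a b + n2 x * V x a * V x b - V x a * n x b - V x b * n x a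

/-- Gauge-transformed `n`. -/
def gaugeN (n : Vec m) (n2 : Sc m) (u : Sc m) (V : Vec m) : Vec m :=
  fun x a => (u x)⁻¹ * (n x a - n2 x * V x a)

/-- Gauge-transformed `n⁽²⁾`. -/
def gaugeN2 (n2 : Sc m) (u : Sc m) : Sc m :=
  fun x => ((u x) ^ 2)⁻¹ * n2 x

/-- Shell energy-momentum tensor `τ^{fa}` built pointwise from the jump `V_{ab}`. -/
def tauP (P : Fin m → Fin m → ℝ) (n : Fin m → ℝ) (n2 : ℝ) (V : Fin m → Fin m → ℝ)
    (f a : Fin m) : ℝ :=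
  (∑ c, ∑ d, (n f * P a c + n a * P f c) * n d * V c d)
  - (∑ c, ∑ d, (n2 * P f c * P a d + P f a * n c * n d) * V c d)
  + (n2 * P f a - n f * n a) * (∑ c, ∑ d, P c d * V c d)

/-- `τ^f_c = −(n⁽²⁾P^{bd} − n^bn^d)(δ^f_dV_{bc} − δ^f_cV_{bd})`. -/
def tauMixP (P : Fin m → Fin m → ℝ) (n : Fin m → ℝ) (n2 : ℝ)
    (V : Fin m → Fin m → ℝ) (f c : Fin m) : ℝ :=
  -(∑ b, ∑ d, (n2 * P b d - n b * n d) * (kd f d * V b c - kd f c * V b d))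

/-- `T^f = (P^{bf}n^c − P^{bc}n^f)V_{bc}`. -/
def tauVecP (P : Fin m → Fin m → ℝ) (n : Fin m → ℝ) (V : Fin m → Fin m → ℝ)
    (f : Fin m) : ℝ :=
  ∑ b, ∑ c, (P b f * n c - P b c * n f) * V b c

/-- The block matrix 𝔸. -/
def blockA (γ : Ten m) (ℓ : Vec m) (ℓ2 : Sc m) (x : Fin m → ℝ) :
    Matrix (Fin m ⊕ Unit) (Fin m ⊕ Unit) ℝ :=
  fun i j =>
    match i, j with
    | Sum.inl a, Sum.inl b => γ x a b
    | Sum.inl a, Sum.inr _ => ℓ x a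
    | Sum.inr _, Sum.inl b => ℓ x b
    | Sum.inr _, Sum.inr _ => ℓ2 x

/-- `det 𝔸` as a scalar field. -/
def detA (γ : Ten m) (ℓ : Vec m) (ℓ2 : Sc m) (x : Fin m → ℝ) : ℝ :=
  (blockA γ ℓ ℓ2 x).det

end HypData


namespace HypData
open Finset

section S5Aux

variable {m : ℕ} {U : Set (Fin m → ℝ)} {x : Fin m → ℝ} {a : Fin m}

lemma pd_congr (hU : IsOpen U) (hx : x ∈ U) {f g : Sc m} (h : ∀ y ∈ U, f y = g y) :
    pd a f x = pd a g x := by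
  unfold pd
  rw [Filter.EventuallyEq.fderiv_eq (Filter.eventuallyEq_of_mem (hU.mem_nhds hx) h)]

lemma pd_const (c : ℝ) : pd a (fun _ => c) x = 0 := by
  simp [pd]

lemma pd_add {f g : Sc m} (hf : DifferentiableAt ℝ f x) (hg : DifferentiableAt ℝ g x) :
    pd a (fun y => f y + g y) x = pd a f x + pd a g x := by
  unfold pd; rw [fderiv_fun_add hf hg]; simp

lemma pd_mul {f g : Sc m} (hf : DifferentiableAt ℝ f x) (hg : DifferentiableAt ℝ g x) :
    pd a (fun y => f y * g y) x = f x * pd a g x + g x * pd a f x := by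
  unfold pd; rw [fderiv_fun_mul hf hg]; simp

lemma pd_sum {ι : Type*} (s : Finset ι) (f : ι → Sc m)
    (hf : ∀ i ∈ s, DifferentiableAt ℝ (f i) x) :
    pd a (fun y => ∑ i ∈ s, f i y) x = ∑ i ∈ s, pd a (f i) x := by
  unfold pd; rw [fderiv_fun_sum hf]; simp

lemma pd_relation (hU : IsOpen U) (hx : x ∈ U)
    (A B : (Fin m → ℝ) → Fin m → ℝ) (s t : Sc m) (k : ℝ)
    (hA : ∀ i, DifferentiableAt ℝ (fun y => A y i) x)
    (hB : ∀ i, DifferentiableAt ℝ (fun y => B y i) x)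
    (hs : DifferentiableAt ℝ s x) (ht : DifferentiableAt ℝ t x)
    (hrel : ∀ y ∈ U, (∑ c, A y c * B y c) + s y * t y = k) (e : Fin m) :
    (∑ c, (A x c * pd e (fun y => B y c) x + B x c * pd e (fun y => A y c) x))
      + (s x * pd e t x + t x * pd e s x) = 0 := by
  have h0 : pd e (fun y => (∑ c, A y c * B y c) + s y * t y) x = 0 := by
    rw [pd_congr hU hx hrel, pd_const]
  have hABi : ∀ i : Fin m, DifferentiableAt ℝ (fun y => A y i * B y i) x :=
    fun i => (hA i).mul (hB i)
  have hsum : DifferentiableAt ℝ (fun y => ∑ c, A y c * B y c) x :=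
    DifferentiableAt.fun_sum fun i _ => hABi i
  rw [pd_add hsum (show DifferentiableAt ℝ (fun y => s y * t y) x from hs.mul ht), pd_sum _ _ (fun i _ => hABi i)] at h0
  rw [Finset.sum_congr rfl (fun c _ => pd_mul (hA c) (hB c)), pd_mul hs ht] at h0
  exact h0

lemma sum_split_psi (Q Y1 u v : Fin m → ℝ) :
    (∑ c, Q c * (Y1 c + (u c - v c) / 2))
      = (∑ c, Q c * Y1 c) + (∑ c, Q c * u c) / 2 - (∑ c, Q c * v c) / 2 := by
  rw [Finset.sum_congr rfl (fun c _ => (by ring :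
      Q c * (Y1 c + (u c - v c) / 2) = Q c * Y1 c + Q c * u c / 2 - Q c * v c / 2)),
    Finset.sum_sub_distrib, Finset.sum_add_distrib, ← Finset.sum_div, ← Finset.sum_div]

lemma sum_gam (W R : Fin m → ℝ) (A B C : Fin m → Fin m → ℝ) (nb : ℝ) (u v yy : Fin m → ℝ) :
    (∑ d, ((∑ e, W e * (A d e + B d e - C d e)) / 2 + nb * (u d + v d) / 2 - nb * yy d) * R d)
      = ((∑ d, ∑ e, W e * (A d e * R d)) + (∑ d, ∑ e, W e * (B d e * R d))
          - (∑ d, ∑ e, W e * (C d e * R d))) / 2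
        + nb * (∑ d, R d * u d) / 2 + nb * (∑ d, R d * v d) / 2 - nb * (∑ d, R d * yy d) := by
  have h : ∀ d : Fin m, ((∑ e, W e * (A d e + B d e - C d e)) / 2 + nb * (u d + v d) / 2
        - nb * yy d) * R d
      = ((∑ e, W e * (A d e * R d)) + (∑ e, W e * (B d e * R d))
          - (∑ e, W e * (C d e * R d))) / 2
        + nb * (R d * u d) / 2 + nb * (R d * v d) / 2 - nb * (R d * yy d) := by
    intro d
    have h1 : (∑ e, W e * (A d e + B d e - C d e)) * R d
        = (∑ e, W e * (A d e * R d)) + (∑ e, W e * (B d e * R d))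
          - (∑ e, W e * (C d e * R d)) := by
      rw [Finset.sum_mul, ← Finset.sum_add_distrib, ← Finset.sum_sub_distrib]
      exact Finset.sum_congr rfl fun e _ => by ring
    rw [← h1]; ring
  rw [Finset.sum_congr rfl fun d _ => h d]
  rw [Finset.sum_sub_distrib, Finset.sum_add_distrib, Finset.sum_add_distrib,
    ← Finset.sum_div, Finset.sum_sub_distrib, Finset.sum_add_distrib,
    ← Finset.sum_div, ← Finset.sum_div,
    ← Finset.mul_sum, ← Finset.mul_sum, ← Finset.mul_sum]

lemma X1val (m : ℕ) (G Pp : Fin m → Fin m → ℝ) (L N : Fin m → ℝ) (L2 : ℝ)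
    (dG dP : Fin m → Fin m → Fin m → ℝ) (dL dN : Fin m → Fin m → ℝ) (dL2 : Fin m → ℝ)
    (symdG : ∀ e a b, dG e a b = dG e b a)
    (symP : ∀ a b, Pp a b = Pp b a)
    (hPG : ∀ b d, (∑ c, Pp b c * G d c) = kd b d - N b * L d)
    (hPL : ∀ b, (∑ c, Pp b c * L c) = -(L2 * N b))
    (E1 : ∀ e a b, (∑ c, Pp a c * dG e c b)
      = -(∑ c, dP e a c * G c b) - dN e a * L b - N a * dL e b)
    (E2 : ∀ e a, (∑ c, dP e a c * L c)
      = -(∑ c, Pp a c * dL e c) - dL2 e * N a - L2 * dN e a)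
    (a b c : Fin m) :
    (∑ d, ∑ e, Pp b e * (dG a d e * Pp d c))
      = -(dP a b c) - N c * (∑ e, Pp b e * dL a e) - N b * N c * dL2 a
        - N b * (∑ d, Pp c d * dL a d) := by
  have h1 : ∀ d : Fin m, (∑ e, Pp b e * (dG a d e * Pp d c))
      = -(∑ e, Pp c d * (dP a b e * G e d)) - dN a b * (Pp c d * L d)
        - N b * (Pp c d * dL a d) := by
    intro d
    have h2 : (∑ e, Pp b e * (dG a d e * Pp d c)) = (∑ e, Pp b e * dG a e d) * Pp d c := by
      rw [Finset.sum_mul]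
      exact Finset.sum_congr rfl fun e _ => by rw [symdG a d e]; ring
    have h3 : (∑ e, Pp c d * (dP a b e * G e d)) = (∑ e, dP a b e * G e d) * Pp d c := by
      rw [Finset.sum_mul]
      exact Finset.sum_congr rfl fun e _ => by rw [symP c d]; ring
    rw [h2, h3, E1, symP c d]; ring
  rw [Finset.sum_congr rfl fun d _ => h1 d, Finset.sum_sub_distrib, Finset.sum_sub_distrib,
    Finset.sum_neg_distrib, ← Finset.mul_sum, ← Finset.mul_sum]
  have h4 : (∑ d, ∑ e, Pp c d * (dP a b e * G e d))
      = dP a b c + N c * ((∑ e, Pp b e * dL a e) + dL2 a * N b + L2 * dN a b) := by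
    rw [Finset.sum_comm]
    have h5 : ∀ e : Fin m, (∑ d, Pp c d * (dP a b e * G e d))
        = dP a b e * kd c e - N c * (dP a b e * L e) := by
      intro e
      have h6 : (∑ d, Pp c d * (dP a b e * G e d)) = dP a b e * (∑ d, Pp c d * G e d) := by
        rw [Finset.mul_sum]
        exact Finset.sum_congr rfl fun d _ => by ring
      rw [h6, hPG]; ring
    rw [Finset.sum_congr rfl fun e _ => h5 e, Finset.sum_sub_distrib, ← Finset.mul_sum]
    have h7 : (∑ e, dP a b e * kd c e) = dP a b c := by
      simp [kd, mul_ite, mul_one, mul_zero]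
    rw [h7, E2]; ring
  rw [h4, hPL]; ring

theorem alg1 (m : ℕ) (G Pp Yy : Fin m → Fin m → ℝ) (L N : Fin m → ℝ) (L2 : ℝ)
    (dG dP : Fin m → Fin m → Fin m → ℝ) (dL dN : Fin m → Fin m → ℝ) (dL2 : Fin m → ℝ)
    (symdG : ∀ e a b, dG e a b = dG e b a)
    (symdP : ∀ e a b, dP e a b = dP e b a)
    (symP : ∀ a b, Pp a b = Pp b a)
    (hPG : ∀ b d, (∑ c, Pp b c * G d c) = kd b d - N b * L d)
    (hPL : ∀ b, (∑ c, Pp b c * L c) = -(L2 * N b))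
    (E1 : ∀ e a b, (∑ c, Pp a c * dG e c b)
      = -(∑ c, dP e a c * G c b) - dN e a * L b - N a * dL e b)
    (E2 : ∀ e a, (∑ c, dP e a c * L c)
      = -(∑ c, Pp a c * dL e c) - dL2 e * N a - L2 * dN e a)
    (a b c : Fin m) :
    dP a b c
      + (∑ d, ((∑ e, Pp b e * (dG a d e + dG d a e - dG e a d)) / 2
          + N b * (dL a d + dL d a) / 2 - N b * Yy a d) * Pp d c)
      + (∑ d, ((∑ e, Pp c e * (dG a d e + dG d a e - dG e a d)) / 2
          + N c * (dL a d + dL d a) / 2 - N c * Yy a d) * Pp b d)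
      + N b * ((∑ d, Pp c d * (Yy a d + (dL a d - dL d a) / 2)) + N c * dL2 a / 2)
      + N c * ((∑ d, Pp b d * (Yy a d + (dL a d - dL d a) / 2)) + N b * dL2 a / 2) = 0 := by
  have hq1 := sum_gam (fun e => Pp b e) (fun d => Pp d c) (fun d e => dG a d e)
    (fun d e => dG d a e) (fun d e => dG e a d) (N b) (fun d => dL a d) (fun d => dL d a)
    (fun d => Yy a d)
  have hq2 := sum_gam (fun e => Pp c e) (fun d => Pp b d) (fun d e => dG a d e)
    (fun d e => dG d a e) (fun d e => dG e a d) (N c) (fun d => dL a d) (fun d => dL d a)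
    (fun d => Yy a d)
  have hpsic := sum_split_psi (fun d => Pp c d) (fun d => Yy a d) (fun d => dL a d)
    (fun d => dL d a)
  have hpsib := sum_split_psi (fun d => Pp b d) (fun d => Yy a d) (fun d => dL a d)
    (fun d => dL d a)
  have hf1 : (∑ d, Pp d c * dL a d) = (∑ d, Pp c d * dL a d) :=
    Finset.sum_congr rfl fun d _ => by rw [symP d c]
  have hf2 : (∑ d, Pp d c * dL d a) = (∑ d, Pp c d * dL d a) :=
    Finset.sum_congr rfl fun d _ => by rw [symP d c]
  have hf3 : (∑ d, Pp d c * Yy a d) = (∑ d, Pp c d * Yy a d) :=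
    Finset.sum_congr rfl fun d _ => by rw [symP d c]
  have hX1 := X1val m G Pp L N L2 dG dP dL dN dL2 symdG symP hPG hPL E1 E2 a b c
  have hY1 := X1val m G Pp L N L2 dG dP dL dN dL2 symdG symP hPG hPL E1 E2 a c b
  have hX2Y3 : (∑ d, ∑ e, Pp b e * (dG d a e * Pp d c))
      = (∑ d, ∑ e, Pp c e * (dG e a d * Pp b d)) := by
    rw [Finset.sum_comm]
    exact Finset.sum_congr rfl fun e _ => Finset.sum_congr rfl fun d _ => by
      rw [symP d c]; ring
  have hX3Y2 : (∑ d, ∑ e, Pp b e * (dG e a d * Pp d c))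
      = (∑ d, ∑ e, Pp c e * (dG d a e * Pp b d)) := by
    rw [Finset.sum_comm]
    exact Finset.sum_congr rfl fun e _ => Finset.sum_congr rfl fun d _ => by
      rw [symP d c]; ring
  have hf4 : (∑ d, ∑ e, Pp c e * (dG a d e * Pp b d))
      = (∑ d, ∑ e, Pp c e * (dG a d e * Pp d b)) :=
    Finset.sum_congr rfl fun d _ => Finset.sum_congr rfl fun e _ => by rw [symP b d]
  rw [hq1, hq2, hpsic, hpsib, hf1, hf2, hf3, hX1, hf4, hY1, hX2Y3, hX3Y2, symdP a c b]
  ring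

theorem alg2 (m : ℕ) (G Pp Yy : Fin m → Fin m → ℝ) (L N : Fin m → ℝ) (L2 N2 : ℝ)
    (dG dP : Fin m → Fin m → Fin m → ℝ) (dL dN : Fin m → Fin m → ℝ) (dL2 dN2 : Fin m → ℝ)
    (symdG : ∀ e a b, dG e a b = dG e b a)
    (hPG : ∀ b d, (∑ c, Pp b c * G d c) = kd b d - N b * L d)
    (hPL : ∀ b, (∑ c, Pp b c * L c) = -(L2 * N b))
    (hGN : ∀ a, (∑ b, G a b * N b) = -(N2 * L a))
    (hNL : (∑ b, N b * L b) = 1 - N2 * L2)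
    (E1 : ∀ e a b, (∑ c, Pp a c * dG e c b)
      = -(∑ c, dP e a c * G c b) - dN e a * L b - N a * dL e b)
    (E2 : ∀ e a, (∑ c, dP e a c * L c)
      = -(∑ c, Pp a c * dL e c) - dL2 e * N a - L2 * dN e a)
    (E3 : ∀ e, (∑ b, dN e b * L b) = -(∑ b, N b * dL e b) - dN2 e * L2 - N2 * dL2 e)
    (E4 : ∀ e a, (∑ b, G a b * dN e b) = -(∑ b, dG e a b * N b) - dN2 e * L a - N2 * dL e a)
    (a b : Fin m) :
    dN a b
      + (∑ d, ((∑ e, Pp b e * (dG a d e + dG d a e - dG e a d)) / 2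
          + N b * (dL a d + dL d a) / 2 - N b * Yy a d) * N d)
      + (N2 * dL2 a / 2 + ∑ c, N c * (Yy a c + (dL a c - dL c a) / 2)) * N b
      - (∑ c, Pp b c * (N2 * Yy a c
          + ((∑ d, (N d * dG d a c + G d c * dN a d + G a d * dN c d))
            + L a * dN2 c + L c * dN2 a) / 2))
      + N2 * ((∑ c, Pp b c * (Yy a c + (dL a c - dL c a) / 2)) + N b * dL2 a / 2) = 0 := by
  have hT1 := sum_gam (fun e => Pp b e) N (fun d e => dG a d e) (fun d e => dG d a e)
    (fun d e => dG e a d) (N b) (fun d => dL a d) (fun d => dL d a) (fun d => Yy a d)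
  have hphi := sum_split_psi N (fun c => Yy a c) (fun c => dL a c) (fun c => dL c a)
  have hpsi := sum_split_psi (fun c => Pp b c) (fun c => Yy a c) (fun c => dL a c)
    (fun c => dL c a)
  have hU : (∑ c, Pp b c * (N2 * Yy a c
        + ((∑ d, (N d * dG d a c + G d c * dN a d + G a d * dN c d))
          + L a * dN2 c + L c * dN2 a) / 2))
      = N2 * (∑ c, Pp b c * Yy a c)
        + ((∑ c, ∑ d, Pp b c * (N d * dG d a c)) + (∑ c, ∑ d, Pp b c * (G d c * dN a d))
            + (∑ c, ∑ d, Pp b c * (G a d * dN c d))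
            + L a * (∑ c, Pp b c * dN2 c) + dN2 a * (∑ c, Pp b c * L c)) / 2 := by
    have h : ∀ c : Fin m, Pp b c * (N2 * Yy a c
          + ((∑ d, (N d * dG d a c + G d c * dN a d + G a d * dN c d))
            + L a * dN2 c + L c * dN2 a) / 2)
        = N2 * (Pp b c * Yy a c)
          + ((∑ d, Pp b c * (N d * dG d a c)) + (∑ d, Pp b c * (G d c * dN a d))
              + (∑ d, Pp b c * (G a d * dN c d))
              + L a * (Pp b c * dN2 c) + dN2 a * (Pp b c * L c)) / 2 := by
      intro c
      have h1 : Pp b c * (∑ d, (N d * dG d a c + G d c * dN a d + G a d * dN c d))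
          = (∑ d, Pp b c * (N d * dG d a c)) + (∑ d, Pp b c * (G d c * dN a d))
            + (∑ d, Pp b c * (G a d * dN c d)) := by
        rw [Finset.mul_sum, ← Finset.sum_add_distrib, ← Finset.sum_add_distrib]
        exact Finset.sum_congr rfl fun d _ => by ring
      rw [← h1]; ring
    rw [Finset.sum_congr rfl fun c _ => h c]
    rw [Finset.sum_add_distrib, ← Finset.mul_sum, ← Finset.sum_div,
      Finset.sum_add_distrib, Finset.sum_add_distrib, Finset.sum_add_distrib,
      Finset.sum_add_distrib, ← Finset.mul_sum, ← Finset.mul_sum]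
  have hB1 : (∑ d, ∑ e, Pp b e * (dG a d e * N d))
      = -(N2 * (∑ c, Pp b c * dL a c)) - N2 * (N b * dL2 a) - dN a b
        - N b * (∑ c, N c * dL a c) := by
    have h1 : ∀ d : Fin m, (∑ e, Pp b e * (dG a d e * N d))
        = -(∑ e, N d * (dP a b e * G e d)) - dN a b * (N d * L d) - N b * (N d * dL a d) := by
      intro d
      have h2 : (∑ e, Pp b e * (dG a d e * N d)) = (∑ e, Pp b e * dG a e d) * N d := by
        rw [Finset.sum_mul]
        exact Finset.sum_congr rfl fun e _ => by rw [symdG a d e]; ring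
      have h3 : (∑ e, N d * (dP a b e * G e d)) = (∑ e, dP a b e * G e d) * N d := by
        rw [Finset.sum_mul]
        exact Finset.sum_congr rfl fun e _ => by ring
      rw [h2, h3, E1]; ring
    rw [Finset.sum_congr rfl fun d _ => h1 d, Finset.sum_sub_distrib, Finset.sum_sub_distrib,
      Finset.sum_neg_distrib, ← Finset.mul_sum, ← Finset.mul_sum]
    have h4 : (∑ d, ∑ e, N d * (dP a b e * G e d))
        = N2 * ((∑ c, Pp b c * dL a c) + dL2 a * N b + L2 * dN a b) := by
      rw [Finset.sum_comm]
      have h5 : ∀ e : Fin m, (∑ d, N d * (dP a b e * G e d)) = dP a b e * (-(N2 * L e)) := by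
        intro e
        rw [← hGN e, Finset.mul_sum]
        exact Finset.sum_congr rfl fun d _ => by ring
      rw [Finset.sum_congr rfl fun e _ => h5 e]
      have h6 : (∑ e, dP a b e * -(N2 * L e)) = (∑ e, dP a b e * L e) * (-N2) := by
        rw [Finset.sum_mul]
        exact Finset.sum_congr rfl fun e _ => by ring
      rw [h6, E2]; ring
    rw [h4, hNL]; ring
  have hC2 : (∑ c, ∑ d, Pp b c * (G d c * dN a d))
      = dN a b + N b * (∑ c, N c * dL a c) + N b * (dN2 a * L2) + N b * (N2 * dL2 a) := by
    rw [Finset.sum_comm]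
    have h1 : ∀ d : Fin m, (∑ c, Pp b c * (G d c * dN a d))
        = dN a d * kd b d - N b * (dN a d * L d) := by
      intro d
      have h2 : (∑ c, Pp b c * (G d c * dN a d)) = dN a d * (∑ c, Pp b c * G d c) := by
        rw [Finset.mul_sum]
        exact Finset.sum_congr rfl fun c _ => by ring
      rw [h2, hPG]; ring
    rw [Finset.sum_congr rfl fun d _ => h1 d, Finset.sum_sub_distrib, ← Finset.mul_sum]
    have h3 : (∑ d, dN a d * kd b d) = dN a b := by
      simp [kd, mul_ite, mul_one, mul_zero]
    have h4 : (∑ d, dN a d * L d) = -(∑ d, N d * dL a d) - dN2 a * L2 - N2 * dL2 a := E3 a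
    rw [h3, h4]; ring
  have hC3 : (∑ c, ∑ d, Pp b c * (G a d * dN c d))
      = -(∑ c, ∑ d, Pp b c * (dG c a d * N d)) - L a * (∑ c, Pp b c * dN2 c)
        - N2 * (∑ c, Pp b c * dL c a) := by
    have h1 : ∀ c : Fin m, (∑ d, Pp b c * (G a d * dN c d))
        = -(∑ d, Pp b c * (dG c a d * N d)) - L a * (Pp b c * dN2 c)
          - N2 * (Pp b c * dL c a) := by
      intro c
      have h2 : (∑ d, Pp b c * (G a d * dN c d)) = Pp b c * (∑ d, G a d * dN c d) := by
        rw [Finset.mul_sum]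
      have h3 : (∑ d, Pp b c * (dG c a d * N d)) = Pp b c * (∑ d, dG c a d * N d) := by
        rw [Finset.mul_sum]
      rw [h2, h3, E4]; ring
    rw [Finset.sum_congr rfl fun c _ => h1 c, Finset.sum_sub_distrib, Finset.sum_sub_distrib,
      Finset.sum_neg_distrib, ← Finset.mul_sum, ← Finset.mul_sum]
  have hC1B2 : (∑ c, ∑ d, Pp b c * (N d * dG d a c))
      = (∑ d, ∑ e, Pp b e * (dG d a e * N d)) := by
    rw [Finset.sum_comm]
    exact Finset.sum_congr rfl fun d _ => Finset.sum_congr rfl fun c _ => by ring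
  have hC3B3 : (∑ c, ∑ d, Pp b c * (dG c a d * N d))
      = (∑ d, ∑ e, Pp b e * (dG e a d * N d)) := by
    rw [Finset.sum_comm]
  rw [hT1, hphi, hpsi, hU, hB1, hC2, hC3, hC1B2, hC3B3, hPL]
  ring

theorem alg3 (m : ℕ) (G Yy : Fin m → Fin m → ℝ) (L N : Fin m → ℝ) (L2 N2 : ℝ)
    (dG : Fin m → Fin m → Fin m → ℝ) (dL dN : Fin m → Fin m → ℝ) (dL2 dN2 : Fin m → ℝ)
    (hGN : ∀ a, (∑ b, G a b * N b) = -(N2 * L a))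
    (hNL : (∑ b, N b * L b) = 1 - N2 * L2)
    (E3 : ∀ e, (∑ b, dN e b * L b) = -(∑ b, N b * dL e b) - dN2 e * L2 - N2 * dL2 e)
    (E4 : ∀ e a, (∑ b, G a b * dN e b) = -(∑ b, dG e a b * N b) - dN2 e * L a - N2 * dL e a)
    (a : Fin m) :
    -(dN2 a) / 2 - N2 * (N2 * dL2 a / 2 + ∑ b, N b * (Yy a b + (dL a b - dL b a) / 2))
      + (∑ b, (N2 * Yy a b
          + ((∑ c, (N c * dG c a b + G c b * dN a c + G a c * dN b c))
            + L a * dN2 b + L b * dN2 a) / 2) * N b) = 0 := by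
  have hphi : (∑ b, N b * (Yy a b + (dL a b - dL b a) / 2))
      = (∑ b, N b * Yy a b) + (∑ b, N b * dL a b) / 2 - (∑ b, N b * dL b a) / 2 := by
    rw [Finset.sum_congr rfl fun b _ => (by ring :
        N b * (Yy a b + (dL a b - dL b a) / 2)
          = N b * Yy a b + N b * dL a b / 2 - N b * dL b a / 2),
      Finset.sum_sub_distrib, Finset.sum_add_distrib, ← Finset.sum_div, ← Finset.sum_div]
  have hK : (∑ b, (N2 * Yy a b
          + ((∑ c, (N c * dG c a b + G c b * dN a c + G a c * dN b c))
            + L a * dN2 b + L b * dN2 a) / 2) * N b)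
      = N2 * (∑ b, N b * Yy a b)
        + ((∑ b, ∑ c, N c * dG c a b * N b) + (∑ b, ∑ c, G c b * dN a c * N b)
            + (∑ b, ∑ c, G a c * dN b c * N b)
            + L a * (∑ b, N b * dN2 b) + dN2 a * (∑ b, N b * L b)) / 2 := by
    rw [Finset.mul_sum, Finset.mul_sum, Finset.mul_sum, ← Finset.sum_add_distrib,
      ← Finset.sum_add_distrib, ← Finset.sum_add_distrib, ← Finset.sum_add_distrib,
      Finset.sum_div, ← Finset.sum_add_distrib]
    refine Finset.sum_congr rfl fun b _ => ?_
    have h1 : (∑ c, (N c * dG c a b + G c b * dN a c + G a c * dN b c)) * N b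
        = (∑ c, N c * dG c a b * N b) + (∑ c, G c b * dN a c * N b)
          + (∑ c, G a c * dN b c * N b) := by
      rw [Finset.sum_mul, ← Finset.sum_add_distrib, ← Finset.sum_add_distrib]
      exact Finset.sum_congr rfl fun c _ => by ring
    rw [← h1]; ring
  have hA1 : (∑ b, ∑ c, N c * dG c a b * N b) = ∑ b, ∑ c, N b * (dG b a c * N c) := by
    rw [Finset.sum_comm]
    exact Finset.sum_congr rfl fun b _ => Finset.sum_congr rfl fun c _ => by ring
  have hA2 : (∑ b, ∑ c, G c b * dN a c * N b)
      = N2 * (∑ b, N b * dL a b) + N2 * dN2 a * L2 + N2 * N2 * dL2 a := by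
    rw [Finset.sum_comm]
    have h1 : ∀ c, (∑ b, G c b * dN a c * N b) = dN a c * L c * (-N2) := by
      intro c
      have : (∑ b, G c b * dN a c * N b) = dN a c * ∑ b, G c b * N b := by
        rw [Finset.mul_sum]; exact Finset.sum_congr rfl fun b _ => by ring
      rw [this, hGN]; ring
    rw [Finset.sum_congr rfl fun c _ => h1 c, ← Finset.sum_mul, E3]
    ring
  have hA3 : (∑ b, ∑ c, G a c * dN b c * N b)
      = -(∑ b, ∑ c, N b * (dG b a c * N c)) - L a * (∑ b, N b * dN2 b)
        - N2 * (∑ b, N b * dL b a) := by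
    have h1 : ∀ b, (∑ c, G a c * dN b c * N b)
        = -(∑ c, N b * (dG b a c * N c)) - L a * (N b * dN2 b) - N2 * (N b * dL b a) := by
      intro b
      have h2 : (∑ c, G a c * dN b c * N b) = (∑ c, G a c * dN b c) * N b := by
        rw [Finset.sum_mul]
      have h3 : (∑ c, N b * (dG b a c * N c)) = (∑ c, dG b a c * N c) * N b := by
        rw [Finset.sum_mul]; exact Finset.sum_congr rfl fun c _ => by ring
      rw [h2, h3, E4]; ring
    rw [Finset.sum_congr rfl fun b _ => h1 b, Finset.sum_sub_distrib, Finset.sum_sub_distrib,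
      Finset.sum_neg_distrib, ← Finset.mul_sum, ← Finset.mul_sum]
  rw [hK, hphi, hA1, hA2, hA3, hNL]; ring

end S5Aux

theorem s5point {m : ℕ} {U : Set (Fin m → ℝ)} (hU : IsOpen U)
    (γ : Ten m) (ℓ : Vec m) (ℓ2 : Sc m) (P : Ten m) (n : Vec m) (n2 : Sc m) (Y : Ten m)
    (hγs : SmTen U γ) (hℓs : SmVec U ℓ) (hℓ2s : SmSc U ℓ2) (hPs : SmTen U P)
    (hns : SmVec U n) (hn2s : SmSc U n2)
    (hγsym : ∀ x ∈ U, ∀ a b, γ x a b = γ x b a)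
    (hPsym : ∀ x ∈ U, ∀ a b, P x a b = P x b a)
    (hinv : ∀ x ∈ U, InvBlocks (γ x) (ℓ x) (ℓ2 x) (P x) (n x) (n2 x))
    {x : Fin m → ℝ} (hx : x ∈ U) :
    (∀ a b c, covD2U (GamB γ ℓ P n Y) P x a b c
        + n x b * Psif ℓ ℓ2 P n Y x c a + n x c * Psif ℓ ℓ2 P n Y x b a = 0)
    ∧ (∀ a b, covD1U (GamB γ ℓ P n Y) n x a b + phif ℓ ℓ2 n n2 Y x a * n x b
        - (∑ c, P x b c * Kf γ ℓ n n2 Y x a c) + n2 x * Psif ℓ ℓ2 P n Y x b a = 0)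
    ∧ (∀ a, -(pd a n2 x) / 2 - n2 x * phif ℓ ℓ2 n n2 Y x a
        + (∑ b, Kf γ ℓ n n2 Y x a b * n x b) = 0) := by
  have hd : ∀ {f : Sc m}, ContDiffOn ℝ (⊤ : ℕ∞) f U → DifferentiableAt ℝ f x :=
    fun h => (h.contDiffAt (hU.mem_nhds hx)).differentiableAt (by simp)
  have hdγ : ∀ a b, DifferentiableAt ℝ (fun y => γ y a b) x := fun a b => hd (hγs a b)
  have hdP : ∀ a b, DifferentiableAt ℝ (fun y => P y a b) x := fun a b => hd (hPs a b)
  have hdℓ : ∀ a, DifferentiableAt ℝ (fun y => ℓ y a) x := fun a => hd (hℓs a)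
  have hdn : ∀ a, DifferentiableAt ℝ (fun y => n y a) x := fun a => hd (hns a)
  have hdℓ2 : DifferentiableAt ℝ ℓ2 x := hd hℓ2s
  have hdn2 : DifferentiableAt ℝ n2 x := hd hn2s
  -- pointwise inverse relations
  have hPG : ∀ b d, (∑ c, P x b c * γ x d c) = kd b d - n x b * ℓ x d := by
    intro b d
    have h := (hinv x hx).1 b d
    have hflip : (∑ c, P x b c * γ x d c) = ∑ c, P x b c * γ x c d :=
      Finset.sum_congr rfl fun c _ => by rw [hγsym x hx d c]
    rw [hflip]; linarith
  have hPL : ∀ b, (∑ c, P x b c * ℓ x c) = -(ℓ2 x * n x b) := by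
    intro b; have h := (hinv x hx).2.1 b; linarith
  have hGN : ∀ a, (∑ b, γ x a b * n x b) = -(n2 x * ℓ x a) := by
    intro a; have h := (hinv x hx).2.2.2 a; linarith
  have hNL : (∑ b, n x b * ℓ x b) = 1 - n2 x * ℓ2 x := by
    have h := (hinv x hx).2.2.1; linarith
  -- symmetry of derivatives
  have symdG : ∀ e a b, pd e (fun y => γ y a b) x = pd e (fun y => γ y b a) x :=
    fun e a b => pd_congr hU hx fun y hy => hγsym y hy a b
  have symdP : ∀ e a b, pd e (fun y => P y a b) x = pd e (fun y => P y b a) x :=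
    fun e a b => pd_congr hU hx fun y hy => hPsym y hy a b
  -- differentiated inverse relations
  have E1 : ∀ e a b, (∑ c, P x a c * pd e (fun y => γ y c b) x)
      = -(∑ c, pd e (fun y => P y a c) x * γ x c b)
        - pd e (fun y => n y a) x * ℓ x b - n x a * pd e (fun y => ℓ y b) x := by
    intro e a b
    have h := pd_relation hU hx (fun y c => P y a c) (fun y c => γ y c b)
      (fun y => n y a) (fun y => ℓ y b) (kd a b)
      (fun i => hdP a i) (fun i => hdγ i b) (hdn a) (hdℓ b)
      (fun y hy => (hinv y hy).1 a b) e
    simp only [Finset.sum_add_distrib] at h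
    have hflip : (∑ c, γ x c b * pd e (fun y => P y a c) x)
        = ∑ c, pd e (fun y => P y a c) x * γ x c b :=
      Finset.sum_congr rfl fun c _ => mul_comm _ _
    linarith [hflip]
  have E2 : ∀ e a, (∑ c, pd e (fun y => P y a c) x * ℓ x c)
      = -(∑ c, P x a c * pd e (fun y => ℓ y c) x)
        - pd e ℓ2 x * n x a - ℓ2 x * pd e (fun y => n y a) x := by
    intro e a
    have h := pd_relation hU hx (fun y c => P y a c) (fun y c => ℓ y c)
      ℓ2 (fun y => n y a) 0
      (fun i => hdP a i) (fun i => hdℓ i) hdℓ2 (hdn a)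
      (fun y hy => (hinv y hy).2.1 a) e
    simp only [Finset.sum_add_distrib] at h
    have hflip : (∑ c, ℓ x c * pd e (fun y => P y a c) x)
        = ∑ c, pd e (fun y => P y a c) x * ℓ x c :=
      Finset.sum_congr rfl fun c _ => mul_comm _ _
    linarith [hflip]
  have E3 : ∀ e, (∑ c, pd e (fun y => n y c) x * ℓ x c)
      = -(∑ c, n x c * pd e (fun y => ℓ y c) x)
        - pd e n2 x * ℓ2 x - n2 x * pd e ℓ2 x := by
    intro e
    have h := pd_relation hU hx (fun y c => n y c) (fun y c => ℓ y c)
      n2 ℓ2 1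
      (fun i => hdn i) (fun i => hdℓ i) hdn2 hdℓ2
      (fun y hy => (hinv y hy).2.2.1) e
    simp only [Finset.sum_add_distrib] at h
    have hflip : (∑ c, ℓ x c * pd e (fun y => n y c) x)
        = ∑ c, pd e (fun y => n y c) x * ℓ x c :=
      Finset.sum_congr rfl fun c _ => mul_comm _ _
    linarith [hflip]
  have E4 : ∀ e a, (∑ c, γ x a c * pd e (fun y => n y c) x)
      = -(∑ c, pd e (fun y => γ y a c) x * n x c)
        - pd e n2 x * ℓ x a - n2 x * pd e (fun y => ℓ y a) x := by
    intro e a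
    have h := pd_relation hU hx (fun y c => γ y a c) (fun y c => n y c)
      n2 (fun y => ℓ y a) 0
      (fun i => hdγ a i) (fun i => hdn i) hdn2 (hdℓ a)
      (fun y hy => (hinv y hy).2.2.2 a) e
    simp only [Finset.sum_add_distrib] at h
    have hflip : (∑ c, n x c * pd e (fun y => γ y a c) x)
        = ∑ c, pd e (fun y => γ y a c) x * n x c :=
      Finset.sum_congr rfl fun c _ => mul_comm _ _
    linarith [hflip]
  refine ⟨fun a b c => ?_, fun a b => ?_, fun a => ?_⟩
  · exact alg1 m (γ x) (P x) (Y x) (ℓ x) (n x) (ℓ2 x)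
      (fun e a b => pd e (fun y => γ y a b) x) (fun e a b => pd e (fun y => P y a b) x)
      (fun e a => pd e (fun y => ℓ y a) x) (fun e a => pd e (fun y => n y a) x)
      (fun e => pd e ℓ2 x)
      symdG symdP (hPsym x hx) hPG hPL E1 E2 a b c
  · exact alg2 m (γ x) (P x) (Y x) (ℓ x) (n x) (ℓ2 x) (n2 x)
      (fun e a b => pd e (fun y => γ y a b) x) (fun e a b => pd e (fun y => P y a b) x)
      (fun e a => pd e (fun y => ℓ y a) x) (fun e a => pd e (fun y => n y a) x)
      (fun e => pd e ℓ2 x) (fun e => pd e n2 x)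
      symdG hPG hPL hGN hNL E1 E2 E3 E4 a b
  · exact alg3 m (γ x) (Y x) (ℓ x) (n x) (ℓ2 x) (n2 x)
      (fun e a b => pd e (fun y => γ y a b) x)
      (fun e a => pd e (fun y => ℓ y a) x) (fun e a => pd e (fun y => n y a) x)
      (fun e => pd e ℓ2 x) (fun e => pd e n2 x)
      hGN hNL E3 E4 a

end HypData

open HypData in
/-- Corollary 2 of the paper, the field equations satisfied by
`P^{ab}`, `n^a`, `n⁽²⁾` for hypersurface data. -/
theorem statement5 (m : ℕ) (hm : 1 ≤ m) (U : Set (Fin m → ℝ)) (hU : IsOpen U)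
    (γ : Ten m) (ℓ : Vec m) (ℓ2 : Sc m) (P : Ten m) (n : Vec m) (n2 : Sc m)
    (hdata : MetricData U γ ℓ ℓ2 P n n2)
    (Y : Ten m) (hYsm : SmTen U Y) (hYs : ∀ x ∈ U, ∀ a b, Y x a b = Y x b a) :
    (∀ x ∈ U, ∀ a b c,
      covD2U (GamB γ ℓ P n Y) P x a b c
        + n x b * Psif ℓ ℓ2 P n Y x c a + n x c * Psif ℓ ℓ2 P n Y x b a = 0)
    ∧ (∀ x ∈ U, ∀ a b,
      covD1U (GamB γ ℓ P n Y) n x a b + phif ℓ ℓ2 n n2 Y x a * n x b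
        - (∑ c, P x b c * Kf γ ℓ n n2 Y x a c) + n2 x * Psif ℓ ℓ2 P n Y x b a = 0)
    ∧ (∀ x ∈ U, ∀ a,
      -(pd a n2 x) / 2 - n2 x * phif ℓ ℓ2 n n2 Y x a
        + (∑ b, Kf γ ℓ n n2 Y x a b * n x b) = 0) := by
  obtain ⟨hγs, hℓs, hℓ2s, hPs, hns, hn2s, hγsym, hPsym, hinv⟩ := hdata
  exact ⟨fun x hx a b c => (s5point hU γ ℓ ℓ2 P n n2 Y hγs hℓs hℓ2s hPs hns hn2s
      hγsym hPsym hinv hx).1 a b c,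
    fun x hx a b => (s5point hU γ ℓ ℓ2 P n n2 Y hγs hℓs hℓ2s hPs hns hn2s
      hγsym hPsym hinv hx).2.1 a b,
    fun x hx a => (s5point hU γ ℓ ℓ2 P n n2 Y hγs hℓs hℓ2s hPs hns hn2s
      hγsym hPsym hinv hx).2.2 a⟩
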